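/- There is no infinite sequence of σ-comparisons between countably complete filters on complete Boolean algebras: one cannot have ⋯ → (F_2, ἀ_2) → (F_1, ἀ_1) → (F_0, ἀ_0) where each h_{n+1,n} : (F_{n+1}, ἀ_{n+1}) → (F_n, ἀ_n) is a σ-comparison. -/

import Mathlib

/-- A σ-map between complete Boolean algebras preserves `⊥`, `⊤`, and countable meets. -/
def SigmaMap {β : Type u} {γ : Type v} [CompleteBooleanAlgebra β] [CompleteBooleanAlgebra γ]
    (h : β → γ) : Prop :=
  h ⊥ = ⊥ ∧ h ⊤ = ⊤ ∧ ∀ f : ℕ → β, h (⨅ n, f n) = ⨅ n, h (f n)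

/-- A countably complete (proper) filter on a complete Boolean algebra. -/
def IsCCFilter {β : Type u} [CompleteBooleanAlgebra β] (F : Set β) : Prop :=
  ⊤ ∈ F ∧ ⊥ ∉ F ∧ (∀ a b : β, a ∈ F → a ≤ b → b ∈ F) ∧
    ∀ g : ℕ → β, (∀ n, g n ∈ F) → (⨅ n, g n) ∈ F

theorem iInf_nat_ite {α : Type*} [CompleteLattice α] (a b : α) :
    (⨅ k : ℕ, if k = 0 then a else b) = a ⊓ b := by
  apply le_antisymm
  · exact le_inf (by simpa using iInf_le (fun k : ℕ => if k = 0 then a else b) 0)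
      (by simpa using iInf_le (fun k : ℕ => if k = 0 then a else b) 1)
  · refine le_iInf fun k => ?_
    by_cases hk : k = 0 <;> simp [hk]

theorem SigmaMap.inf_eq {β : Type u} {γ : Type v} [CompleteBooleanAlgebra β]
    [CompleteBooleanAlgebra γ] {h : β → γ} (hh : SigmaMap h) (a b : β) :
    h (a ⊓ b) = h a ⊓ h b := by
  have h1 := hh.2.2 (fun k => if k = 0 then a else b)
  rw [iInf_nat_ite] at h1
  rw [h1]
  simp only [apply_ite h]
  exact iInf_nat_ite _ _

theorem SigmaMap.mono {β : Type u} {γ : Type v} [CompleteBooleanAlgebra β]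
    [CompleteBooleanAlgebra γ] {h : β → γ} (hh : SigmaMap h) {a b : β} (hab : a ≤ b) :
    h a ≤ h b := by
  have : h (a ⊓ b) = h a ⊓ h b := hh.inf_eq a b
  rw [inf_eq_left.mpr hab] at this
  rw [this]
  exact inf_le_right

/-- `⟦ἀ < x⟧`: the join of the partition pieces below `x`. -/
def Lo {α : Type u} [CompleteBooleanAlgebra α] (e : Ordinal.{v} → α) (x : Ordinal.{v}) : α :=
  ⨆ γ, ⨆ _ : γ < x, e γ

/-- The comparison element `⟦ἀ_{n+1} < ἀ_n⟧_{h n}`. -/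
def cEl {B : ℕ → Type u} [∀ n, CompleteBooleanAlgebra (B n)]
    (e : ∀ n : ℕ, Ordinal.{v} → B n) (h : ∀ n : ℕ, B (n + 1) → B n) (n : ℕ) : B n :=
  ⨆ x : Ordinal.{v}, h n (Lo (e (n + 1)) x) ⊓ e n x

/-- Push `c (n+k)` down to level `n` through the maps `h`. -/
def pushC {B : ℕ → Type u} (c : ∀ n, B n) (h : ∀ n : ℕ, B (n + 1) → B n) : ℕ → ∀ n, B n :=
  fun k => Nat.rec c (fun _ ih n => h n (ih (n + 1))) k

/-- The meet, at level `n`, of all the future comparison constraints. -/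
def rEl {B : ℕ → Type u} [∀ n, CompleteBooleanAlgebra (B n)]
    (e : ∀ n : ℕ, Ordinal.{v} → B n) (h : ∀ n : ℕ, B (n + 1) → B n) (n : ℕ) : B n :=
  ⨅ k, pushC (cEl e h) h k n

/-- There is no infinite sequence of σ-comparisons
`⋯ → (F₂, ἀ₂) → (F₁, ἀ₁) → (F₀, ἀ₀)` between countably complete filters on complete
Boolean algebras: each `h n : B (n+1) → B n` is a σ-map carrying `F (n+1)` into `F n`
with `⟦ἀ_{n+1} < ἀ_n⟧_{h n} ∈ F n`. -/
theorem stmt9 (B : ℕ → Type u) [∀ n, CompleteBooleanAlgebra (B n)]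
    (F : ∀ n, Set (B n)) (hF : ∀ n, IsCCFilter (F n))
    (e : ∀ n : ℕ, Ordinal.{v} → B n)
    (hdisj : ∀ (n : ℕ) (β γ : Ordinal.{v}), β ≠ γ → e n β ⊓ e n γ = ⊥)
    (hpart : ∀ n : ℕ, (⨆ β : Ordinal.{v}, e n β) = ⊤)
    (h : ∀ n : ℕ, B (n + 1) → B n) (hσ : ∀ n, SigmaMap (h n))
    (hred : ∀ (n : ℕ) (a : B (n + 1)), a ∈ F (n + 1) → h n a ∈ F n)
    (hcmp : ∀ n : ℕ,
      (⨆ β : Ordinal.{v},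
        h n (⨆ γ : Ordinal.{v}, ⨆ _ : γ < β, e (n + 1) γ) ⊓ e n β) ∈ F n) :
    False := by
  classical
  -- the comparison elements belong to the filters
  have hcF : ∀ n, cEl e h n ∈ F n := hcmp
  -- every pushed-down comparison element belongs to the filter
  have hGF : ∀ k n, pushC (cEl e h) h k n ∈ F n := by
    intro k
    induction k with
    | zero => exact hcF
    | succ k ih => exact fun n => hred n _ (ih (n + 1))
  -- the master constraint at level 0 is in F 0, hence nonzero
  have hrF : rEl e h 0 ∈ F 0 := (hF 0).2.2.2 (fun k => pushC (cEl e h) h k 0) (fun k => hGF k 0)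
  have hrne : rEl e h 0 ≠ ⊥ := fun hb => (hF 0).2.1 (hb ▸ hrF)
  -- r n ≤ c n
  have hrc : ∀ n, rEl e h n ≤ cEl e h n := fun n => iInf_le (fun k => pushC (cEl e h) h k n) 0
  -- r n ≤ h n (r (n+1))
  have hrh : ∀ n, rEl e h n ≤ h n (rEl e h (n + 1)) := by
    intro n
    have hq : h n (rEl e h (n + 1)) = ⨅ k, h n (pushC (cEl e h) h k (n + 1)) :=
      (hσ n).2.2 (fun k => pushC (cEl e h) h k (n + 1))
    rw [hq]
    exact le_iInf fun k => iInf_le (fun j => pushC (cEl e h) h j n) (k + 1)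
  -- key comparison inequality : e n γ ⊓ c n ≤ h n ⟦ἀ_{n+1} < γ⟧
  have hkeyE : ∀ (n : ℕ) (γ : Ordinal.{v}), e n γ ⊓ cEl e h n ≤ h n (Lo (e (n + 1)) γ) := by
    intro n γ
    rw [cEl, inf_iSup_eq]
    refine iSup_le fun x => ?_
    rcases eq_or_ne x γ with rfl | hne
    · exact inf_le_right.trans inf_le_left
    · have hb : e n γ ⊓ (h n (Lo (e (n + 1)) x) ⊓ e n x) ≤ e n γ ⊓ e n x :=
        inf_le_inf_left _ inf_le_right
      rw [hdisj n γ x hne.symm] at hb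
      exact hb.trans bot_le
  -- the set of ordinals realized somewhere
  set S : Set Ordinal.{v} := {γ | ∃ n, e n γ ⊓ rEl e h n ≠ ⊥} with hSdef
  have hSne : S.Nonempty := by
    by_contra hcon
    apply hrne
    have hall : ∀ γ : Ordinal.{v}, e 0 γ ⊓ rEl e h 0 = ⊥ := by
      intro γ
      by_contra hγ
      exact hcon ⟨γ, 0, hγ⟩
    have : rEl e h 0 = (⨆ γ : Ordinal.{v}, e 0 γ) ⊓ rEl e h 0 := by rw [hpart 0, top_inf_eq]
    rw [this, iSup_inf_eq]
    simp [hall]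
  -- take the least realized ordinal and descend strictly below it
  obtain ⟨n, hn⟩ : wellFounded_lt.min S hSne ∈ S := wellFounded_lt.min_mem S hSne
  set γ := wellFounded_lt.min S hSne with hγdef
  have h1 : e n γ ⊓ rEl e h n ≤ h n (Lo (e (n + 1)) γ ⊓ rEl e h (n + 1)) := by
    calc e n γ ⊓ rEl e h n
        ≤ e n γ ⊓ (cEl e h n ⊓ h n (rEl e h (n + 1))) :=
          inf_le_inf_left _ (le_inf (hrc n) (hrh n))
      _ = (e n γ ⊓ cEl e h n) ⊓ h n (rEl e h (n + 1)) := (inf_assoc _ _ _).symm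
      _ ≤ h n (Lo (e (n + 1)) γ) ⊓ h n (rEl e h (n + 1)) :=
          inf_le_inf_right _ (hkeyE n γ)
      _ = h n (Lo (e (n + 1)) γ ⊓ rEl e h (n + 1)) := ((hσ n).inf_eq _ _).symm
  have h2 : Lo (e (n + 1)) γ ⊓ rEl e h (n + 1) ≠ ⊥ := by
    intro hb
    apply hn
    rw [hb, (hσ n).1] at h1
    exact le_bot_iff.mp h1
  obtain ⟨δ, hδγ, hδ⟩ : ∃ δ, δ < γ ∧ e (n + 1) δ ⊓ rEl e h (n + 1) ≠ ⊥ := by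
    by_contra hcon
    push_neg at hcon
    apply h2
    rw [Lo, iSup_inf_eq]
    refine iSup_eq_bot.mpr fun δ => ?_
    rw [iSup_inf_eq]
    refine iSup_eq_bot.mpr fun hlt => ?_
    exact hcon δ hlt
  exact wellFounded_lt.not_lt_min S (⟨n + 1, hδ⟩ : δ ∈ S) hδγ
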